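/- Let Z ⊆ ℝ^n be convex, F : Z → ℝ^n, and D a Bregman divergence over a differentiable convex 1-strongly-convex function d with respect to a norm ‖·‖. Fix t, and suppose ẑ_t, z_t, z_{t+1} ∈ Z and γ_t > 0 satisfy: (i) γ_t⟨G, ẑ_t − z⟩ ≤ D(z, z_t) − D(z, ẑ_t) − D(ẑ_t, z_t) for all z ∈ Z, where G ∈ ℝ^n; (ii) γ_t⟨F(ẑ_t), z_{t+1} − z⟩ ≤ D(z, z_t) − D(z, z_{t+1}) − D(z_{t+1}, z_t) for all z ∈ Z; (iii) ‖F(ẑ_t) − G‖_* ≤ (L_p/p!)‖ẑ_t − z_t‖^p; and (iv) γ_t ≤ p!/(16 L_p ‖ẑ_t − z_t‖^{p−1}). Then for all z ∈ Z: γ_t⟨F(ẑ_t), ẑ_t − z⟩ + (1/4)‖ẑ_t − z_t‖² + (1/4)‖z_{t+1} − ẑ_t‖² ≤ D(z, z_t) − D(z, z_{t+1}). -/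
import Mathlib


open scoped RealInnerProductSpace

/-- Per-step inequality of HigherOrderMirrorProx. Here `N` is a norm on `ℝⁿ` (with dual norm
`Ndual`, encoded through nonnegativity and Hölder's inequality `⟪a,b⟫ ≤ Ndual a · N b`), and
`D` is the Bregman divergence of a `1`-strongly-convex (w.r.t. `N`) differentiable convex `d`,
encoded by `D u v = d u − d v − ⟪∇d v, u − v⟫` and `D u v ≥ ½ N(u−v)²`. `G` plays the role of
the Taylor approximation `T_{p−1}(ẑ_t; z_t)`. -/
theorem stmt15 {n : ℕ} (Z : Set (EuclideanSpace ℝ (Fin n))) (hZ : Convex ℝ Z)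
    (F : EuclideanSpace ℝ (Fin n) → EuclideanSpace ℝ (Fin n))
    (N Ndual : EuclideanSpace ℝ (Fin n) → ℝ)
    (hN : ∀ x, 0 ≤ N x) (hNdual : ∀ x, 0 ≤ Ndual x)
    (hHolder : ∀ a b, ⟪a, b⟫ ≤ Ndual a * N b)
    (d : EuclideanSpace ℝ (Fin n) → ℝ) (hdconv : ConvexOn ℝ Z d)
    (Gd : EuclideanSpace ℝ (Fin n) → EuclideanSpace ℝ (Fin n))
    (hGd : ∀ z ∈ Z, HasGradientAt d (Gd z) z)
    (D : EuclideanSpace ℝ (Fin n) → EuclideanSpace ℝ (Fin n) → ℝ)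
    (hD : ∀ u v, D u v = d u - d v - ⟪Gd v, u - v⟫)
    (hstrong : ∀ u v, (1 / 2) * N (u - v) ^ 2 ≤ D u v)
    (p : ℕ) (hp : 1 ≤ p) (L : ℝ) (hL : 0 < L) (γ : ℝ) (hγ : 0 < γ)
    (zhat zt zt1 : EuclideanSpace ℝ (Fin n))
    (hzhat : zhat ∈ Z) (hzt : zt ∈ Z) (hzt1 : zt1 ∈ Z)
    (G : EuclideanSpace ℝ (Fin n))
    (h1 : ∀ z ∈ Z, γ * ⟪G, zhat - z⟫ ≤ D z zt - D z zhat - D zhat zt)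
    (h2 : ∀ z ∈ Z, γ * ⟪F zhat, zt1 - z⟫ ≤ D z zt - D z zt1 - D zt1 zt)
    (h3 : Ndual (F zhat - G) ≤ (L / (p.factorial : ℝ)) * N (zhat - zt) ^ p)
    (h4 : γ ≤ (p.factorial : ℝ) / (16 * L * N (zhat - zt) ^ (p - 1))) :
    ∀ z ∈ Z,
      γ * ⟪F zhat, zhat - z⟫ + (1 / 4) * N (zhat - zt) ^ 2 + (1 / 4) * N (zt1 - zhat) ^ 2
        ≤ D z zt - D z zt1 := by
  intro z hz
  set A := N (zhat - zt) with hA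
  set c := γ * Ndual (F zhat - G) with hc
  have hAnn : 0 ≤ A := hN _
  have hfact : (0:ℝ) < (p.factorial : ℝ) := by exact_mod_cast p.factorial_pos
  -- A^(p-1) > 0, otherwise h4 forces γ ≤ 0
  have hB : 0 < A ^ (p - 1) := by
    rcases (pow_nonneg hAnn (p - 1)).lt_or_eq with h | h
    · exact h
    · exfalso
      rw [← h, mul_zero, div_zero] at h4
      linarith
  -- c ≤ A / 16
  have hc16 : c ≤ A / 16 := by
    have h4' : γ * (16 * L * A ^ (p - 1)) ≤ (p.factorial : ℝ) := by
      rw [← le_div_iff₀ (by positivity)]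
      exact h4
    have hApow : A ^ p = A ^ (p - 1) * A := by
      conv_lhs => rw [← Nat.succ_pred_eq_of_pos hp]
      rw [pow_succ, Nat.pred_eq_sub_one]
    have := mul_le_mul_of_nonneg_left h3 hγ.le
    rw [hApow] at this
    have hA16 : γ * (L / (p.factorial : ℝ) * (A ^ (p - 1) * A)) ≤ A / 16 := by
      rw [div_mul_eq_mul_div, mul_div_assoc', div_le_div_iff₀ hfact (by norm_num)]
      nlinarith [mul_le_mul_of_nonneg_right h4' hAnn]
    linarith
  have hcnn : 0 ≤ c := mul_nonneg hγ.le (hNdual _)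
  -- inner product split
  have hsplit : ∀ w : EuclideanSpace ℝ (Fin n),
      ⟪F zhat, zhat - w⟫ =
        ⟪F zhat - G, zhat - zt1⟫ + ⟪G, zhat - zt1⟫ + ⟪F zhat, zt1 - w⟫ := by
    intro w
    simp only [inner_sub_left, inner_sub_right]
    ring
  -- Hölder
  have hHol : γ * ⟪F zhat - G, zhat - zt1⟫ ≤ c * N (zhat - zt1) := by
    rw [hc, mul_assoc]
    exact mul_le_mul_of_nonneg_left (hHolder _ _) hγ.le
  set M := N (zhat - zt1) with hM
  have hMnn : 0 ≤ M := hN _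
  -- control M via h2 at zhat and h1 at zt1
  have hstep : (1 / 2) * M ^ 2 ≤ c * M := by
    have e1 := h2 zhat hzhat
    have e2 := h1 zt1 hzt1
    have e3 := hstrong zhat zt1
    have e4 : (0:ℝ) ≤ D zt1 zhat := le_trans (by positivity) (hstrong zt1 zhat)
    have e5 : γ * ⟪F zhat, zt1 - zhat⟫ =
        - (γ * ⟪F zhat - G, zhat - zt1⟫) - γ * ⟪G, zhat - zt1⟫ := by
      have := hsplit zhat
      have h0 : ⟪F zhat, zhat - zhat⟫ = (0:ℝ) := by simp
      nlinarith [this]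
    rw [e5] at e1
    linarith
  have hcM : c * M ≤ 2 * c ^ 2 := by nlinarith [sq_nonneg (M - 2 * c)]
  -- main chain
  have e1 := h1 zt1 hzt1
  have e2 := h2 z hz
  have e3 := hstrong zt1 zhat
  have e4 := hstrong zhat zt
  have e5 : γ * ⟪F zhat, zhat - z⟫ =
      γ * ⟪F zhat - G, zhat - zt1⟫ + γ * ⟪G, zhat - zt1⟫ + γ * ⟪F zhat, zt1 - z⟫ := by
    rw [hsplit z]; ring
  nlinarith [hHol, hstep, hcM, hc16, hcnn, hAnn]
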